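/- arXiv:1111.2532 — 3 statements merged into one kernel-verified Lean document; each statement's English description precedes it below -/
import Mathlib

section
/- Let (a_i) be a sequence of positive reals converging to a limit a > 0. Then the sequence b_n := min over 1 ≤ k ≤ n of (1/k) * (a_{n-k+1} + a_{n-k+2} + ... + a_n) converges to a as n → ∞. -/
open Filter

/-- If `a i` are positive reals converging to `L > 0`, then the minimum over
`1 ≤ k ≤ n` of the average of the last `k` terms `a (n-k+1), ..., a n`
converges to `L`. -/
theorem stmt_0 (a : ℕ → ℝ) (L : ℝ) (hpos : ∀ i, 0 < a i) (hL : 0 < L)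
    (ha : Tendsto a atTop (nhds L)) :
    Tendsto (fun n : ℕ =>
        (Finset.Icc 1 (n + 1)).inf' (Finset.nonempty_Icc.mpr (by omega))
          (fun k => (1 / (k : ℝ)) * ∑ i ∈ Finset.Icc (n + 1 - k + 1) (n + 1), a i))
      atTop (nhds L) := by
  rw [Metric.tendsto_atTop]
  intro ε hε
  have hδ : 0 < min (ε/4) (L/2) := lt_min (by linarith) (by linarith)
  set δ := min (ε/4) (L/2) with hδdef
  have hδε : δ ≤ ε/4 := min_le_left _ _
  have hδL : δ ≤ L/2 := min_le_right _ _
  obtain ⟨N, hN⟩ := (Metric.tendsto_atTop.mp ha) δ hδ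
  obtain ⟨M, hM⟩ := exists_nat_gt (4 * L * N / ε)
  refine ⟨max N M, fun n hn => ?_⟩
  have hnN : N ≤ n := le_trans (le_max_left _ _) hn
  have hnM : (4 * L * N / ε) < (n : ℝ) := lt_of_lt_of_le hM (by
    exact_mod_cast le_trans (le_max_right _ _) hn)
  have hfrac : (N:ℝ) * L / (n+1) < ε/4 := by
    rw [div_lt_iff₀ (by positivity)]
    have h1 : 4 * L * (N:ℝ) < (n:ℝ) * ε := (div_lt_iff₀ hε).mp hnM
    nlinarith
  have hai : ∀ i, N ≤ i → L - δ < a i := by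
    intro i hi
    have := hN i hi
    rw [Real.dist_eq, abs_lt] at this
    linarith [this.1]
  set b := (Finset.Icc 1 (n + 1)).inf' (Finset.nonempty_Icc.mpr (by omega))
          (fun k => (1 / (k : ℝ)) * ∑ i ∈ Finset.Icc (n + 1 - k + 1) (n + 1), a i) with hb
  have hlow : L - ε/2 ≤ b := by
    apply Finset.le_inf'
    intro k hk
    simp only [Finset.mem_Icc] at hk
    obtain ⟨hk1, hk2⟩ := hk
    have hk0 : (0:ℝ) < k := by exact_mod_cast hk1
    by_cases hcase : N ≤ n + 1 - k + 1
    · have hcard : (Finset.Icc (n + 1 - k + 1) (n + 1)).card = k := by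
        rw [Nat.card_Icc]; omega
      have hsum : (k:ℝ) * (L - δ) ≤ ∑ i ∈ Finset.Icc (n + 1 - k + 1) (n + 1), a i := by
        calc (k:ℝ) * (L - δ) = ∑ _i ∈ Finset.Icc (n + 1 - k + 1) (n + 1), (L - δ) := by
              rw [Finset.sum_const, hcard, nsmul_eq_mul]
          _ ≤ _ := Finset.sum_le_sum (fun i hi => by
              simp only [Finset.mem_Icc] at hi
              exact (hai i (le_trans hcase hi.1)).le)
      rw [one_div, inv_mul_eq_div, le_div_iff₀ hk0]
      nlinarith
    · -- window contains Icc N (n+1)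
      push_neg at hcase
      have hsub : Finset.Icc N (n + 1) ⊆ Finset.Icc (n + 1 - k + 1) (n + 1) := by
        intro x hx
        simp only [Finset.mem_Icc] at hx ⊢
        omega
      have hcard : (Finset.Icc N (n + 1)).card = n + 2 - N := by
        rw [Nat.card_Icc]
      have hsum1 : ((n:ℝ) + 2 - N) * (L - δ) ≤ ∑ i ∈ Finset.Icc N (n + 1), a i := by
        calc ((n:ℝ) + 2 - N) * (L - δ) = ∑ _i ∈ Finset.Icc N (n + 1), (L - δ) := by
              rw [Finset.sum_const, hcard]
              have : ((n + 2 - N : ℕ) : ℝ) = (n:ℝ) + 2 - N := by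
                push_cast [Nat.cast_sub (by omega : N ≤ n + 2)]; ring
              rw [nsmul_eq_mul, this]
          _ ≤ _ := Finset.sum_le_sum (fun i hi => by
              simp only [Finset.mem_Icc] at hi
              exact (hai i hi.1).le)
      have hsum2 : ∑ i ∈ Finset.Icc N (n + 1), a i
          ≤ ∑ i ∈ Finset.Icc (n + 1 - k + 1) (n + 1), a i :=
        Finset.sum_le_sum_of_subset_of_nonneg hsub (fun i _ _ => (hpos i).le)
      have hS : ((n:ℝ) + 2 - N) * (L - δ) ≤ ∑ i ∈ Finset.Icc (n + 1 - k + 1) (n + 1), a i :=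
        le_trans hsum1 hsum2
      rw [one_div, inv_mul_eq_div, le_div_iff₀ hk0]
      have hkn : (k:ℝ) ≤ (n:ℝ) + 1 := by exact_mod_cast hk2
      have hNpos : (0:ℝ) ≤ N := Nat.cast_nonneg N
      have hn1 : (0:ℝ) < (n:ℝ) + 1 := by positivity
      have hfrac' : (N:ℝ) * L < ε/4 * ((n:ℝ)+1) := by
        rw [div_lt_iff₀ hn1] at hfrac; linarith
      -- want (L - ε/2) * k ≤ sum; have sum ≥ (n+2-N)(L-δ)
      have hnNr : (N:ℝ) ≤ (n:ℝ) := by exact_mod_cast hnN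
      have hkey : (L - ε/2) * k ≤ ((n:ℝ) + 2 - N) * (L - δ) := by
        rcases le_or_gt (L - ε/2) 0 with h0 | h0
        · have h2 : (0:ℝ) ≤ ((n:ℝ) + 2 - N) * (L - δ) :=
            mul_nonneg (by linarith) (by linarith)
          nlinarith
        · nlinarith [mul_nonneg hNpos (by linarith : (0:ℝ) ≤ δ),
            mul_nonneg (by linarith : (0:ℝ) ≤ (n:ℝ) + 1 - k) h0.le]
      linarith
  have hupp : b ≤ a (n + 1) := by
    have h1 : (1 : ℕ) ∈ Finset.Icc 1 (n + 1) := by simp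
    have h2 := Finset.inf'_le
      (fun k : ℕ => (1 / (k : ℝ)) * ∑ i ∈ Finset.Icc (n + 1 - k + 1) (n + 1), a i) h1
    rw [hb]
    refine le_trans h2 (le_of_eq ?_)
    norm_num
  have han1 : a (n + 1) < L + δ := by
    have := hN (n + 1) (by omega)
    rw [Real.dist_eq, abs_lt] at this
    linarith [this.2]
  rw [Real.dist_eq, abs_lt]
  constructor <;> [skip; skip]
  · linarith
  · linarith
end

section
/- Let (Y_j) be a martingale difference sequence with E(Y_j²) ≤ U for all j and some constant U, and fix γ ∈ (0, 1/4). Then the family of random variables max_{1≤k≤n} k^{γ−1} |∑_{j=1}^k Y_j|, indexed by n, is bounded in probability (i.e., O_P(1)): for every ε > 0 there exists a > 0 with P(max_{1≤k≤n} k^{γ−1}|∑_{j=1}^k Y_j| > a) < ε for all n. -/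
open MeasureTheory

private theorem l2mul {Ω : Type*} {m0 : MeasurableSpace Ω} {μ : Measure Ω}
    {f g : Ω → ℝ} (hf : MemLp f 2 μ) (hg : MemLp g 2 μ) :
    Integrable (fun ω => f ω * g ω) μ := by
  have h : MemLp (g • f) 1 μ := hf.smul hg
  exact (memLp_one_iff_integrable.mp h).congr (ae_of_all _ fun ω => mul_comm (g ω) (f ω))

/-- For a martingale difference sequence `Y` with uniformly bounded second
moments and `γ ∈ (0, 1/4)`, the maxima `max_{1≤k≤n} k^{γ-1} |∑_{j=1}^k Y j|`
are bounded in probability, uniformly in `n`. -/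
theorem stmt_10 {Ω : Type*} {m0 : MeasurableSpace Ω} {μ : Measure Ω}
    [IsProbabilityMeasure μ] (ℱ : Filtration ℕ m0) (Y : ℕ → Ω → ℝ)
    (hadp : ∀ j, StronglyMeasurable[ℱ j] (Y j))
    (hL2 : ∀ j, MemLp (Y j) 2 μ)
    (hmd : ∀ j : ℕ, 1 ≤ j → μ[Y j | ℱ (j - 1)] =ᵐ[μ] 0)
    (U : ℝ) (hU : ∀ j, ∫ ω, (Y j ω) ^ 2 ∂μ ≤ U)
    (γ : ℝ) (hγ : γ ∈ Set.Ioo (0 : ℝ) (1 / 4)) :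
    ∀ ε > (0 : ℝ), ∃ a > (0 : ℝ), ∀ n : ℕ,
      (μ {ω | ∃ k ∈ Finset.Icc 1 n,
          a < (k : ℝ) ^ (γ - 1) * |∑ j ∈ Finset.Icc 1 k, Y j ω|}).toReal < ε := by
  obtain ⟨hγ0, hγ4⟩ := hγ
  set S : ℕ → Ω → ℝ := fun k ω => ∑ j ∈ Finset.Icc 1 k, Y j ω with hSdef
  have hSmem : ∀ k, MemLp (S k) 2 μ := fun k =>
    memLp_finset_sum (Finset.Icc 1 k) (fun j _ => hL2 j)
  have hSsm : ∀ k, StronglyMeasurable[ℱ k] (S k) := fun k =>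
    Finset.stronglyMeasurable_fun_sum _ fun j hj =>
      (hadp j).mono (ℱ.mono (Finset.mem_Icc.mp hj).2)
  have hYint : ∀ j, Integrable (Y j) μ := fun j => (hL2 j).integrable one_le_two
  have hU0 : 0 ≤ U := le_trans (integral_nonneg fun ω => sq_nonneg _) (hU 0)
  -- orthogonality of increments
  have horth : ∀ i j : ℕ, 1 ≤ i → i < j → ∫ ω, Y i ω * Y j ω ∂μ = 0 := by
    intro i j hi hij
    have hle : ℱ i ≤ ℱ (j - 1) := ℱ.mono (by omega)
    have hsm : StronglyMeasurable[ℱ (j - 1)] (Y i) := (hadp i).mono hle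
    have hint : Integrable (fun ω => Y i ω * Y j ω) μ := l2mul (hL2 i) (hL2 j)
    have h1 : μ[(fun ω => Y i ω * Y j ω)|ℱ (j - 1)] =ᵐ[μ] fun ω =>
        Y i ω * (μ[Y j|ℱ (j - 1)]) ω :=
      condExp_mul_of_stronglyMeasurable_left hsm hint (hYint j)
    have h2 : μ[(fun ω => Y i ω * Y j ω)|ℱ (j - 1)] =ᵐ[μ] fun _ => (0 : ℝ) := by
      filter_upwards [h1, hmd j (by omega)] with ω hω1 hω2
      simp [hω1, hω2]
    calc ∫ ω, Y i ω * Y j ω ∂μ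
        = ∫ ω, (μ[(fun ω => Y i ω * Y j ω)|ℱ (j - 1)]) ω ∂μ :=
          (integral_condExp (ℱ.le (j - 1))).symm
      _ = 0 := by rw [integral_congr_ae h2]; simp
  -- energy bound
  have henergy : ∀ n, ∫ ω, S n ω * S n ω ∂μ ≤ U * n := by
    intro n
    have hexp : ∀ ω, S n ω * S n ω =
        ∑ i ∈ Finset.Icc 1 n, ∑ j ∈ Finset.Icc 1 n, Y i ω * Y j ω := by
      intro ω; rw [hSdef]; exact Finset.sum_mul_sum _ _ _ _
    rw [integral_congr_ae (ae_of_all _ hexp)]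
    rw [integral_finset_sum _ fun i _ =>
      integrable_finset_sum _ fun j _ => l2mul (hL2 i) (hL2 j)]
    have : ∀ i ∈ Finset.Icc 1 n,
        (∫ ω, ∑ j ∈ Finset.Icc 1 n, Y i ω * Y j ω ∂μ) = ∫ ω, Y i ω * Y i ω ∂μ := by
      intro i hi
      rw [integral_finset_sum _ fun j _ => l2mul (hL2 i) (hL2 j)]
      rw [Finset.sum_eq_single i]
      · intro j hj hji
        rcases lt_or_gt_of_ne hji with h | h
        · rw [show (∫ ω, Y i ω * Y j ω ∂μ) = ∫ ω, Y j ω * Y i ω ∂μ from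
            integral_congr_ae (ae_of_all _ fun ω => mul_comm _ _)]
          exact horth j i (Finset.mem_Icc.mp hj).1 h
        · exact horth i j (Finset.mem_Icc.mp hi).1 h
      · intro h; exact absurd hi h
    rw [Finset.sum_congr rfl this]
    calc ∑ i ∈ Finset.Icc 1 n, ∫ ω, Y i ω * Y i ω ∂μ
        ≤ ∑ i ∈ Finset.Icc 1 n, U := by
          refine Finset.sum_le_sum fun i _ => ?_
          calc (∫ ω, Y i ω * Y i ω ∂μ) = ∫ ω, (Y i ω) ^ 2 ∂μ := by
                refine integral_congr_ae (ae_of_all _ fun ω => ?_); ring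
            _ ≤ U := hU i
      _ = U * n := by rw [Finset.sum_const, Nat.card_Icc]; simp [mul_comm]
  -- the squared partial sums form a submartingale
  have hsub : Submartingale (fun k ω => S k ω * S k ω) ℱ μ := by
    refine submartingale_nat (fun k => (hSsm k).mul (hSsm k))
      (fun k => l2mul (hSmem k) (hSmem k)) fun i => ?_
    have hdec : ∀ ω, S (i + 1) ω = S i ω + Y (i + 1) ω := by
      intro ω; rw [hSdef]
      exact Finset.sum_Icc_succ_top (Nat.le_add_left 1 i) _
    have hsq : (fun ω => S (i + 1) ω * S (i + 1) ω) = fun ω =>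
        (S i ω * S i ω + (2 * S i ω) * Y (i + 1) ω) + Y (i + 1) ω * Y (i + 1) ω := by
      funext ω; rw [hdec ω]; ring
    have hi1 : Integrable (fun ω => S i ω * S i ω) μ := l2mul (hSmem i) (hSmem i)
    have hi2 : Integrable (fun ω => (2 * S i ω) * Y (i + 1) ω) μ :=
      l2mul ((hSmem i).const_mul 2) (hL2 (i + 1))
    have hi3 : Integrable (fun ω => Y (i + 1) ω * Y (i + 1) ω) μ :=
      l2mul (hL2 (i + 1)) (hL2 (i + 1))
    have hc1 : μ[(fun ω => S i ω * S i ω)|ℱ i] = fun ω => S i ω * S i ω :=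
      condExp_of_stronglyMeasurable (ℱ.le i) ((hSsm i).mul (hSsm i)) hi1
    have hc2 : μ[(fun ω => (2 * S i ω) * Y (i + 1) ω)|ℱ i] =ᵐ[μ] fun _ => (0 : ℝ) := by
      have hpull : μ[(fun ω => (2 * S i ω) * Y (i + 1) ω)|ℱ i] =ᵐ[μ]
          fun ω => (2 * S i ω) * (μ[Y (i + 1)|ℱ i]) ω :=
        condExp_mul_of_stronglyMeasurable_left ((hSsm i).const_mul 2) hi2 (hYint (i + 1))
      have hmd' : μ[Y (i + 1)|ℱ i] =ᵐ[μ] 0 := hmd (i + 1) (Nat.le_add_left 1 i)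
      filter_upwards [hpull, hmd'] with ω h1 h2
      simp [h1, h2]
    have hc3 : (fun _ => (0 : ℝ)) ≤ᵐ[μ] μ[(fun ω => Y (i + 1) ω * Y (i + 1) ω)|ℱ i] :=
      condExp_nonneg (ae_of_all _ fun ω => mul_self_nonneg _)
    have hadd : μ[(fun ω => S (i + 1) ω * S (i + 1) ω)|ℱ i] =ᵐ[μ]
        μ[(fun ω => S i ω * S i ω)|ℱ i] + μ[(fun ω => (2 * S i ω) * Y (i + 1) ω)|ℱ i]
          + μ[(fun ω => Y (i + 1) ω * Y (i + 1) ω)|ℱ i] := by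
      rw [hsq]
      exact (condExp_add (hi1.add hi2) hi3 _).trans
        (Filter.EventuallyEq.add (condExp_add hi1 hi2 _) (Filter.EventuallyEq.refl _ _))
    filter_upwards [hadd, hc2, hc3] with ω h0 h2 h3
    have : (μ[(fun ω => S (i + 1) ω * S (i + 1) ω)|ℱ i]) ω
        = S i ω * S i ω + 0 + (μ[(fun ω => Y (i + 1) ω * Y (i + 1) ω)|ℱ i]) ω := by
      rw [h0]; simp only [Pi.add_apply, hc1, h2]
    rw [this]; simpa using h3
  -- Doob's inequality in probability form
  have doob : ∀ t : ℝ, 0 < t → ∀ N : ℕ,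
      μ {ω | ∃ k ∈ Finset.Icc 1 N, t ≤ |S k ω|} ≤ ENNReal.ofReal (U * N / (t * t)) := by
    intro t ht N
    set ε' : NNReal := ⟨t * t, (mul_pos ht ht).le⟩ with hε'
    have hmax := maximal_ineq hsub (fun k ω => mul_self_nonneg _) (ε := ε') N
    have hincl : {ω | ∃ k ∈ Finset.Icc 1 N, t ≤ |S k ω|} ⊆
        {ω | (ε' : ℝ) ≤ (Finset.range (N + 1)).sup'
          Finset.nonempty_range_add_one fun k => S k ω * S k ω} := by
      rintro ω ⟨k, hk, hkt⟩
      have hkN : k ∈ Finset.range (N + 1) :=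
        Finset.mem_range.mpr (Nat.lt_succ_of_le (Finset.mem_Icc.mp hk).2)
      refine le_trans ?_ (Finset.le_sup' (fun k => S k ω * S k ω) hkN)
      calc (ε' : ℝ) = t * t := rfl
        _ ≤ |S k ω| * |S k ω| := mul_le_mul hkt hkt ht.le (abs_nonneg _)
        _ = S k ω * S k ω := abs_mul_abs_self _
    have hsetint : (∫ ω in {ω | (ε' : ℝ) ≤ (Finset.range (N + 1)).sup'
        Finset.nonempty_range_add_one fun k => S k ω * S k ω}, S N ω * S N ω ∂μ)
        ≤ ∫ ω, S N ω * S N ω ∂μ :=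
      setIntegral_le_integral (l2mul (hSmem N) (hSmem N))
        (ae_of_all _ fun ω => mul_self_nonneg _)
    have key : (ε' : ENNReal) * μ {ω | ∃ k ∈ Finset.Icc 1 N, t ≤ |S k ω|}
        ≤ ENNReal.ofReal (U * N) := by
      calc (ε' : ENNReal) * μ {ω | ∃ k ∈ Finset.Icc 1 N, t ≤ |S k ω|}
          ≤ (ε' : ENNReal) * μ {ω | (ε' : ℝ) ≤ (Finset.range (N + 1)).sup'
            Finset.nonempty_range_add_one fun k => S k ω * S k ω} :=
            mul_le_mul_right (measure_mono hincl) _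
        _ ≤ ENNReal.ofReal (∫ ω in {ω | (ε' : ℝ) ≤ (Finset.range (N + 1)).sup'
            Finset.nonempty_range_add_one fun k => S k ω * S k ω}, S N ω * S N ω ∂μ) := hmax
        _ ≤ ENNReal.ofReal (U * N) :=
            ENNReal.ofReal_le_ofReal (le_trans hsetint (henergy N))
    have hε'pos : (0 : NNReal) < ε' := by
      rw [← NNReal.coe_lt_coe]; exact mul_pos ht ht
    have hε'0 : (ε' : ENNReal) ≠ 0 := ENNReal.coe_ne_zero.mpr hε'pos.ne'
    have key' : μ {ω | ∃ k ∈ Finset.Icc 1 N, t ≤ |S k ω|} * (ε' : ENNReal)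
        ≤ ENNReal.ofReal (U * N) := by rw [mul_comm]; exact key
    have := (ENNReal.le_div_iff_mul_le (Or.inl hε'0) (Or.inl ENNReal.coe_ne_top)).mpr key'
    refine le_trans this (le_of_eq ?_)
    have hcoe : ENNReal.ofReal (t * t) = (ε' : ENNReal) := by
      rw [ENNReal.ofReal, Real.toNNReal_of_nonneg (mul_pos ht ht).le]; rfl
    rw [ENNReal.ofReal_div_of_pos (mul_pos ht ht), hcoe]
  -- main argument
  intro ε hε
  set r : ℝ := (2:ℝ) ^ (2 * γ - 1) with hrdef
  have hr0 : (0:ℝ) < r := Real.rpow_pos_of_pos two_pos _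
  have hr1 : r < 1 := Real.rpow_lt_one_of_one_lt_of_neg one_lt_two (by linarith)
  set K : ℝ := 2 * U * (1 - r)⁻¹ with hKdef
  have hK0 : 0 ≤ K := mul_nonneg (by linarith) (inv_nonneg.mpr (by linarith))
  set a : ℝ := Real.sqrt (K / ε + 1) with hadef
  have hKε : 0 ≤ K / ε := div_nonneg hK0 hε.le
  have ha1 : 1 ≤ a := by
    have h := Real.sqrt_le_sqrt (show (1:ℝ) ≤ K / ε + 1 by linarith)
    rwa [Real.sqrt_one] at h
  have ha0 : (0:ℝ) < a := lt_of_lt_of_le one_pos ha1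
  have haa : a * a = K / ε + 1 := Real.mul_self_sqrt (by linarith)
  refine ⟨a, ha0, fun n => ?_⟩
  set A : ℕ → Set Ω := fun m =>
    {ω | ∃ k ∈ Finset.Icc 1 (2 ^ (m + 1)), a * ((2:ℝ) ^ m) ^ (1 - γ) ≤ |S k ω|} with hAdef
  have htm : ∀ m : ℕ, (0:ℝ) < a * ((2:ℝ) ^ m) ^ (1 - γ) := fun m =>
    mul_pos ha0 (Real.rpow_pos_of_pos (by positivity) _)
  have hsubset : {ω | ∃ k ∈ Finset.Icc 1 n,
      a < (k : ℝ) ^ (γ - 1) * |∑ j ∈ Finset.Icc 1 k, Y j ω|} ⊆ ⋃ m, A m := by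
    intro ω hω
    obtain ⟨k, hk, hak⟩ := hω
    have hk1 : 1 ≤ k := (Finset.mem_Icc.mp hk).1
    set m := Nat.log 2 k with hmdef
    have h1 : 2 ^ m ≤ k := Nat.pow_log_le_self 2 (by omega)
    have h2 : k < 2 ^ (m + 1) := Nat.lt_pow_succ_log_self (by norm_num) k
    refine Set.mem_iUnion.mpr ⟨m, ⟨k, Finset.mem_Icc.mpr ⟨hk1, h2.le⟩, ?_⟩⟩
    have hkpos : (0:ℝ) < (k:ℝ) := by exact_mod_cast hk1
    have hk1γ : (0:ℝ) < (k:ℝ) ^ (1 - γ) := Real.rpow_pos_of_pos hkpos _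
    have hkg : (k:ℝ) ^ (γ - 1) = ((k:ℝ) ^ (1 - γ))⁻¹ := by
      rw [← Real.rpow_neg hkpos.le]; ring_nf
    have step1 : a * (k:ℝ) ^ (1 - γ) < |S k ω| := by
      rw [hkg] at hak
      have h' : a < |S k ω| / (k:ℝ) ^ (1 - γ) := by
        rw [div_eq_inv_mul]; exact hak
      exact (lt_div_iff₀ hk1γ).mp h'
    have step2 : a * ((2:ℝ) ^ m) ^ (1 - γ) ≤ a * (k:ℝ) ^ (1 - γ) := by
      refine mul_le_mul_of_nonneg_left ?_ ha0.le
      refine Real.rpow_le_rpow (by positivity) ?_ (by linarith)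
      exact_mod_cast h1
    exact step2.trans step1.le
  have hcalc : ∀ m : ℕ, U * ((2 ^ (m + 1) : ℕ) : ℝ) /
      ((a * ((2:ℝ) ^ m) ^ (1 - γ)) * (a * ((2:ℝ) ^ m) ^ (1 - γ)))
      = (2 * U / (a * a)) * r ^ m := by
    intro m
    have h2m : ((2:ℝ) ^ m) = (2:ℝ) ^ (m:ℝ) := (Real.rpow_natCast 2 m).symm
    have hB : ((2:ℝ) ^ m) ^ (1 - γ) = (2:ℝ) ^ ((m:ℝ) * (1 - γ)) := by
      rw [h2m, ← Real.rpow_mul (by norm_num)]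
    have hrm : r ^ m = (2:ℝ) ^ ((2 * γ - 1) * (m:ℝ)) := by
      rw [← Real.rpow_natCast r m, hrdef, ← Real.rpow_mul (by norm_num)]
    have hcast : ((2 ^ (m + 1) : ℕ) : ℝ) = 2 * (2:ℝ) ^ (m:ℝ) := by
      push_cast
      rw [pow_succ, ← h2m]; ring
    rw [hcast, hB, hrm]
    have hsplit : (2:ℝ) ^ (m:ℝ) = (2:ℝ) ^ ((2 * γ - 1) * (m:ℝ)) *
        ((2:ℝ) ^ ((m:ℝ) * (1 - γ)) * (2:ℝ) ^ ((m:ℝ) * (1 - γ))) := by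
      rw [← Real.rpow_add two_pos, ← Real.rpow_add two_pos]
      congr 1; ring
    rw [hsplit]
    have hp1 : ((2:ℝ) ^ ((m:ℝ) * (1 - γ))) ≠ 0 := (Real.rpow_pos_of_pos two_pos _).ne'
    field_simp
  have hbound : μ {ω | ∃ k ∈ Finset.Icc 1 n,
      a < (k : ℝ) ^ (γ - 1) * |∑ j ∈ Finset.Icc 1 k, Y j ω|}
      ≤ ENNReal.ofReal (K / (a * a)) := by
    calc μ {ω | ∃ k ∈ Finset.Icc 1 n,
          a < (k : ℝ) ^ (γ - 1) * |∑ j ∈ Finset.Icc 1 k, Y j ω|}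
        ≤ μ (⋃ m, A m) := measure_mono hsubset
      _ ≤ ∑' m, μ (A m) := measure_iUnion_le A
      _ ≤ ∑' m, ENNReal.ofReal ((2 * U / (a * a)) * r ^ m) := by
          refine ENNReal.tsum_le_tsum fun m => ?_
          have := doob (a * ((2:ℝ) ^ m) ^ (1 - γ)) (htm m) (2 ^ (m + 1))
          rw [hcalc m] at this
          exact this
      _ = ENNReal.ofReal (∑' m, (2 * U / (a * a)) * r ^ m) := by
          rw [ENNReal.ofReal_tsum_of_nonneg]
          · intro m
            exact mul_nonneg (div_nonneg (by linarith) (mul_self_nonneg a))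
              (pow_nonneg hr0.le m)
          · exact (summable_geometric_of_lt_one hr0.le hr1).mul_left _
      _ = ENNReal.ofReal (K / (a * a)) := by
          rw [tsum_mul_left, tsum_geometric_of_lt_one hr0.le hr1, hKdef]
          congr 1; field_simp
  have hlt : K / (a * a) < ε := by
    rw [div_lt_iff₀ (by positivity), haa]
    have : ε * (K / ε) = K := by field_simp
    nlinarith [hε, hK0]
  calc (μ {ω | ∃ k ∈ Finset.Icc 1 n,
        a < (k : ℝ) ^ (γ - 1) * |∑ j ∈ Finset.Icc 1 k, Y j ω|}).toReal
      ≤ (ENNReal.ofReal (K / (a * a))).toReal :=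
        ENNReal.toReal_mono ENNReal.ofReal_ne_top hbound
    _ = K / (a * a) := ENNReal.toReal_ofReal (by positivity)
    _ < ε := hlt
end

section
/- Let (X_k)_{k≥0} be an ergodic ℕ₀^p-valued Markov chain whose distribution converges to a stationary distribution π in total variation: ∑_x |P(X_n = x) − π(x)| → 0. Let ρ ∈ (0,1) and let g: ℕ₀^p → ℝ satisfy E|g(X̃)| < ∞ where X̃ ~ π. If for every starting state x the ergodic averages (1/m) ∑_{k=1}^m g(X_k) converge in probability to E g(X̃) under P(·|X_0 = x), then (1/(n − ⌊nρ⌋)) ∑_{k=⌊nρ⌋+1}^n g(X_k) converges in probability to E g(X̃) as n → ∞. -/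
open MeasureTheory ProbabilityTheory Filter

/-- For an ergodic time-homogeneous Markov chain on `ℕ₀^p` whose marginal laws
converge in total variation to the stationary distribution `w`, if for every
starting state the ergodic averages of `g` converge in probability to the
stationary mean, then the averages over the window `(⌊nρ⌋, n]` also converge in
probability to the stationary mean. -/
theorem stmt_18 {Ω : Type*} {m0 : MeasurableSpace Ω} {μ : Measure Ω}
    [IsProbabilityMeasure μ] (p : ℕ) (X : ℕ → Ω → (Fin p → ℕ))
    (hmeas : ∀ k, Measurable (X k))
    (hhom : ∀ (m : ℕ) (x : Fin p → ℕ), μ {ω | X m ω = x} ≠ 0 →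
      Measure.map (fun ω (k : ℕ) => X (m + k) ω) (μ[|{ω | X m ω = x}])
        = Measure.map (fun ω (k : ℕ) => X k ω) (μ[|{ω | X 0 ω = x}]))
    (w : (Fin p → ℕ) → ℝ) (hw0 : ∀ x, 0 ≤ w x) (hw1 : HasSum w 1)
    (hTV : Tendsto
      (fun n : ℕ => ∑' x : Fin p → ℕ, |(μ {ω | X n ω = x}).toReal - w x|)
      atTop (nhds 0))
    (ρ : ℝ) (hρ : ρ ∈ Set.Ioo (0 : ℝ) 1)
    (g : (Fin p → ℕ) → ℝ) (hg : Summable (fun x => |g x| * w x))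
    (herg : ∀ x : Fin p → ℕ, μ {ω | X 0 ω = x} ≠ 0 → ∀ ε > (0 : ℝ),
      Tendsto (fun m : ℕ =>
          μ[|{ω | X 0 ω = x}] {ω | ε ≤
            |(1 / (m : ℝ)) * ∑ k ∈ Finset.Icc 1 m, g (X k ω)
              - ∑' y, g y * w y|})
        atTop (nhds 0)) :
    ∀ ε > (0 : ℝ),
      Tendsto (fun n : ℕ =>
          μ {ω | ε ≤
            |(1 / ((n - ⌊(n : ℝ) * ρ⌋₊ : ℕ) : ℝ)) *
                ∑ k ∈ Finset.Icc (⌊(n : ℝ) * ρ⌋₊ + 1) n, g (X k ω)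
              - ∑' y, g y * w y|})
        atTop (nhds 0) := by
  obtain ⟨hρ0, hρ1⟩ := hρ
  intro ε hε
  have hgm : Measurable g := measurable_of_countable g
  -- notation
  set M : ℝ := ∑' y, g y * w y with hM
  set mn : ℕ → ℕ := fun n => ⌊(n : ℝ) * ρ⌋₊ with hmndef
  set L : ℕ → ℕ := fun n => n - mn n with hLdef
  -- path sets
  set S : ℕ → Set (ℕ → Fin p → ℕ) :=
    fun l => {y | ε ≤ |(1 / (l : ℝ)) * ∑ j ∈ Finset.Icc 1 l, g (y j) - M|} with hSdef
  have hSmeas : ∀ l, MeasurableSet (S l) := by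
    intro l
    have : Measurable fun y : ℕ → Fin p → ℕ =>
        |(1 / (l : ℝ)) * ∑ j ∈ Finset.Icc 1 l, g (y j) - M| := by
      apply Measurable.abs
      apply Measurable.sub _ measurable_const
      exact (Finset.measurable_sum _ fun j _ => hgm.comp (measurable_pi_apply j)).const_mul _
    exact measurableSet_le measurable_const this
  set E : ℕ → Set Ω := fun n => {ω | ε ≤
      |(1 / ((n - ⌊(n : ℝ) * ρ⌋₊ : ℕ) : ℝ)) *
          ∑ k ∈ Finset.Icc (⌊(n : ℝ) * ρ⌋₊ + 1) n, g (X k ω) - M|} with hEdef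
  have hmn_le : ∀ n : ℕ, mn n ≤ n := by
    intro n
    have : (n : ℝ) * ρ ≤ (n : ℝ) := by nlinarith [Nat.cast_nonneg (α := ℝ) n]
    simpa [hmndef] using Nat.floor_mono this |>.trans_eq (Nat.floor_natCast n)
  have hΦmeas : ∀ m : ℕ, Measurable (fun ω (k : ℕ) => X (m + k) ω) := fun m =>
    measurable_pi_lambda _ fun k => hmeas (m + k)
  have hΦ0meas : Measurable (fun ω (k : ℕ) => X k ω) :=
    measurable_pi_lambda _ fun k => hmeas k
  have hsmeas : ∀ (m : ℕ) (x : Fin p → ℕ), MeasurableSet {ω | X m ω = x} := fun m x =>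
    (hmeas m) (measurableSet_singleton x)
  -- E n as preimage of S (L n)
  have hE_eq : ∀ n, E n = (fun ω (k : ℕ) => X (mn n + k) ω) ⁻¹' S (L n) := by
    intro n
    have hsum : ∀ ω, ∑ k ∈ Finset.Icc (mn n + 1) n, g (X k ω)
        = ∑ j ∈ Finset.Icc 1 (L n), g (X (mn n + j) ω) := by
      intro ω
      have h2 : Finset.Icc (mn n + 1) n
          = (Finset.Icc 1 (L n)).map (addLeftEmbedding (mn n)) := by
        rw [Finset.map_add_left_Icc, Nat.add_sub_cancel' (hmn_le n)]
      rw [h2, Finset.sum_map]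
      simp [addLeftEmbedding_apply]
    ext ω
    simp only [hEdef, hSdef, Set.mem_setOf_eq, Set.mem_preimage, hsum ω]
    show ε ≤ |1 / ((L n : ℕ) : ℝ) * ∑ k ∈ Finset.Icc (mn n + 1) n, g (X k ω) - M| ↔ _
    rw [hsum ω]
  -- measurability of E n
  have hEmeas : ∀ n, MeasurableSet (E n) := fun n =>
    (hE_eq n) ▸ (hΦmeas (mn n)) (hSmeas (L n))
  -- from nonzero mass at time m, nonzero mass at time 0
  have hzero : ∀ (m : ℕ) (x : Fin p → ℕ), μ {ω | X m ω = x} ≠ 0 → μ {ω | X 0 ω = x} ≠ 0 := by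
    intro m x hne h0
    have hcz : μ[|{ω | X 0 ω = x}] = 0 := cond_eq_zero_of_meas_eq_zero h0
    have h1 := hhom m x hne
    rw [hcz, Measure.map_zero] at h1
    haveI : IsProbabilityMeasure (μ[|{ω | X m ω = x}]) :=
      cond_isProbabilityMeasure hne
    haveI : IsProbabilityMeasure
        (Measure.map (fun ω (k : ℕ) => X (m + k) ω) (μ[|{ω | X m ω = x}])) :=
      Measure.isProbabilityMeasure_map (hΦmeas m).aemeasurable
    have := measure_univ (μ := Measure.map (fun ω (k : ℕ) => X (m + k) ω)
      (μ[|{ω | X m ω = x}]))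
    rw [h1] at this
    simp at this
  -- conditional probabilities
  set c : ℕ → (Fin p → ℕ) → ℝ := fun n x => (μ[|{ω | X (mn n) ω = x}] (E n)).toReal with hcdef
  set d : (Fin p → ℕ) → ℕ → ℝ :=
    fun x l => (μ[|{ω | X 0 ω = x}] ((fun ω (k : ℕ) => X k ω) ⁻¹' S l)).toReal with hddef
  have hc_nonneg : ∀ n x, 0 ≤ c n x := fun n x => ENNReal.toReal_nonneg
  have hd_nonneg : ∀ x l, 0 ≤ d x l := fun x l => ENNReal.toReal_nonneg
  have hcond_le_one : ∀ (s t : Set Ω), MeasurableSet s → μ[|s] t ≤ 1 := by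
    intro s t hs
    by_cases h : μ s = 0
    · rw [cond_eq_zero_of_meas_eq_zero h]; simp
    · haveI := cond_isProbabilityMeasure (μ := μ) (s := s) h
      exact prob_le_one
  have hc_le_one : ∀ n x, c n x ≤ 1 := by
    intro n x
    have := hcond_le_one _ (E n) (hsmeas (mn n) x)
    simpa [hcdef] using ENNReal.toReal_mono (by simp) this
  -- key identity: conditional window probability = conditional from time 0
  have hc_eq : ∀ n x, μ {ω | X (mn n) ω = x} ≠ 0 → c n x = d x (L n) := by
    intro n x hne
    have h1 : μ[|{ω | X (mn n) ω = x}] (E n)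
        = (Measure.map (fun ω (k : ℕ) => X (mn n + k) ω)
            (μ[|{ω | X (mn n) ω = x}])) (S (L n)) := by
      rw [Measure.map_apply (hΦmeas (mn n)) (hSmeas (L n)), hE_eq n]
    have h2 : μ[|{ω | X (mn n) ω = x}] (E n)
        = μ[|{ω | X 0 ω = x}] ((fun ω (k : ℕ) => X k ω) ⁻¹' S (L n)) := by
      rw [h1, hhom (mn n) x hne, Measure.map_apply hΦ0meas (hSmeas (L n))]
    exact congrArg ENNReal.toReal h2
  -- ergodic convergence of d x
  have herg' : ∀ x, μ {ω | X 0 ω = x} ≠ 0 → Tendsto (d x) atTop (nhds 0) := by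
    intro x hx
    have hset : ∀ l : ℕ, (fun ω (k : ℕ) => X k ω) ⁻¹' S l
        = {ω | ε ≤ |(1 / (l : ℝ)) * ∑ k ∈ Finset.Icc 1 l, g (X k ω) - M|} := by
      intro l; rfl
    have h := herg x hx ε hε
    have h2 : Tendsto (fun l : ℕ => μ[|{ω | X 0 ω = x}] ((fun ω (k : ℕ) => X k ω) ⁻¹' S l))
        atTop (nhds 0) := by
      simpa only [hset] using h
    have := (ENNReal.tendsto_toReal (a := 0) (by simp)).comp h2
    simpa [hddef, Function.comp_def] using this
  -- mn and L tend to infinity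
  have hmn_top : Tendsto mn atTop atTop := by
    exact tendsto_nat_floor_atTop.comp (tendsto_natCast_atTop_atTop.atTop_mul_const hρ0)
  have hL_top : Tendsto L atTop atTop := by
    rw [tendsto_atTop]
    intro b
    have h1 : Tendsto (fun n : ℕ => (n : ℝ) * (1 - ρ)) atTop atTop :=
      tendsto_natCast_atTop_atTop.atTop_mul_const (by linarith)
    filter_upwards [tendsto_atTop.mp h1 (b : ℝ)] with n hn
    have hfl : (⌊(n : ℝ) * ρ⌋₊ : ℝ) ≤ (n : ℝ) * ρ := Nat.floor_le (by positivity)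
    have hcast : ((L n : ℕ) : ℝ) = (n : ℝ) - (mn n : ℝ) := by
      rw [hLdef]; push_cast [Nat.cast_sub (hmn_le n)]; ring
    have : (b : ℝ) ≤ ((L n : ℕ) : ℝ) := by rw [hcast]; simp only [hmndef]; nlinarith
    exact_mod_cast this
  -- partition identities
  have hdisj : ∀ (m : ℕ) (t : Set Ω), Pairwise (Function.onFun Disjoint
      (fun x : Fin p → ℕ => t ∩ {ω | X m ω = x})) := by
    intro m t x y hxy
    simp only [Function.onFun]
    rw [Set.disjoint_left]
    rintro ω ⟨-, h1⟩ ⟨-, h2⟩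
    exact hxy (h1.symm.trans h2)
  have hpart : ∀ (m : ℕ) (t : Set Ω), MeasurableSet t → μ t = ∑' x, μ (t ∩ {ω | X m ω = x}) := by
    intro m t ht
    rw [← measure_iUnion (hdisj m t) (fun x => ht.inter (hsmeas m x))]
    congr 1
    ext ω
    simp only [Set.mem_iUnion, Set.mem_inter_iff, Set.mem_setOf_eq]
    exact ⟨fun h => ⟨X m ω, h, rfl⟩, fun ⟨x, h, _⟩ => h⟩
  -- marginal masses
  set q : ℕ → (Fin p → ℕ) → ℝ := fun n x => (μ {ω | X (mn n) ω = x}).toReal with hqdef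
  have hq_nonneg : ∀ n x, 0 ≤ q n x := fun n x => ENNReal.toReal_nonneg
  have hq_summable : ∀ n, Summable (q n) := by
    intro n
    apply ENNReal.summable_toReal
    have hp := hpart (mn n) Set.univ MeasurableSet.univ
    simp only [Set.univ_inter] at hp
    rw [← hp]
    exact measure_ne_top μ _
  -- decomposition of μ (E n)
  have hdecomp : ∀ n, (μ (E n)).toReal = ∑' x, q n x * c n x := by
    intro n
    rw [hpart (mn n) (E n) (hEmeas n),
      ENNReal.tsum_toReal_eq (fun x => measure_ne_top μ _)]
    congr 1
    funext x
    by_cases h : μ {ω | X (mn n) ω = x} = 0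
    · have h1 : μ (E n ∩ {ω | X (mn n) ω = x}) = 0 :=
        measure_mono_null Set.inter_subset_right h
      simp [hqdef, hcdef, h1, h, cond_eq_zero_of_meas_eq_zero h]
    · have key : μ (E n ∩ {ω | X (mn n) ω = x})
          = μ {ω | X (mn n) ω = x} * μ[|{ω | X (mn n) ω = x}] (E n) := by
        rw [Set.inter_comm, cond_apply (hsmeas (mn n) x) μ (E n), ← mul_assoc,
          ENNReal.mul_inv_cancel h (measure_ne_top μ _), one_mul]
      rw [key, ENNReal.toReal_mul]
  -- summability facts
  have hws : Summable w := hw1.summable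
  have hc_summ : ∀ n, Summable (fun x => q n x * c n x) := fun n =>
    Summable.of_nonneg_of_le (fun x => mul_nonneg (hq_nonneg n x) (hc_nonneg n x))
      (fun x => mul_le_of_le_one_right (hq_nonneg n x) (hc_le_one n x)) (hq_summable n)
  have habs_summ : ∀ n, Summable (fun x => |q n x - w x|) := fun n =>
    ((hq_summable n).sub hws).abs
  have hwc_summ : ∀ n, Summable (fun x => w x * c n x) := fun n =>
    Summable.of_nonneg_of_le (fun x => mul_nonneg (hw0 x) (hc_nonneg n x))
      (fun x => mul_le_of_le_one_right (hw0 x) (hc_le_one n x)) hws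
  have hbound : ∀ n, (μ (E n)).toReal
      ≤ (∑' x, |q n x - w x|) + ∑' x, w x * c n x := by
    intro n
    rw [hdecomp n, ← Summable.tsum_add (habs_summ n) (hwc_summ n)]
    refine Summable.tsum_le_tsum (fun x => ?_) (hc_summ n) ((habs_summ n).add (hwc_summ n))
    have h1 : q n x - w x ≤ |q n x - w x| := le_abs_self _
    nlinarith [mul_nonneg (sub_nonneg.mpr h1) (hc_nonneg n x),
      mul_nonneg (abs_nonneg (q n x - w x)) (sub_nonneg.mpr (hc_le_one n x))]
  -- the two error terms tend to zero
  have hT1 : Tendsto (fun n => ∑' x, |q n x - w x|) atTop (nhds 0) := by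
    have := hTV.comp hmn_top
    simpa [Function.comp_def, hqdef] using this
  have hc_to_zero : ∀ x, Tendsto (fun n => c n x) atTop (nhds 0) := by
    intro x
    by_cases hx : μ {ω | X 0 ω = x} = 0
    · have hz : ∀ n, c n x = 0 := by
        intro n
        by_cases h : μ {ω | X (mn n) ω = x} = 0
        · simp [hcdef, cond_eq_zero_of_meas_eq_zero h]
        · exact absurd (hzero (mn n) x h) (not_not.mpr hx)
      simp only [hz]
      exact tendsto_const_nhds
    · have hd := (herg' x hx).comp hL_top
      refine squeeze_zero (fun n => hc_nonneg n x) (fun n => ?_) hd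
      by_cases h : μ {ω | X (mn n) ω = x} = 0
      · have : c n x = 0 := by simp [hcdef, cond_eq_zero_of_meas_eq_zero h]
        rw [this]
        exact hd_nonneg x (L n)
      · rw [hc_eq n x h]
        exact le_refl _
  have hT2 : Tendsto (fun n => ∑' x, w x * c n x) atTop (nhds 0) := by
    have h := tendsto_tsum_of_dominated_convergence (𝓕 := atTop)
      (f := fun n x => w x * c n x) (g := fun _ => (0 : ℝ)) (bound := w) hws
      (fun x => by simpa using (hc_to_zero x).const_mul (w x))
      (Eventually.of_forall fun n x => by
        rw [Real.norm_eq_abs, abs_of_nonneg (mul_nonneg (hw0 x) (hc_nonneg n x))]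
        exact mul_le_of_le_one_right (hw0 x) (hc_le_one n x))
    simpa using h
  -- conclude
  have hreal : Tendsto (fun n => (μ (E n)).toReal) atTop (nhds 0) := by
    have hsum := hT1.add hT2
    rw [add_zero] at hsum
    exact squeeze_zero (fun n => ENNReal.toReal_nonneg) hbound hsum
  have hfin : ∀ n, μ (E n) ≠ ⊤ := fun n => measure_ne_top μ _
  have hfinal : Tendsto (fun n => μ (E n)) atTop (nhds 0) := by
    have h := ENNReal.tendsto_ofReal hreal
    rw [ENNReal.ofReal_zero] at h
    exact h.congr fun n => ENNReal.ofReal_toReal (hfin n)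
  exact hfinal
end
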